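/- arXiv:2204.11074 — 2 statements merged into one kernel-verified Lean document; each statement's English description precedes it below -/
import Mathlib

section
/- The logarithmic derivative of the Barnes G-function satisfies d/dz log G(z+1) = (1/2)·log(2π) - 1/2 - z + z · d/dz log Γ(z+1), for z > 0. -/
open Real Filter Topology Finset

local notation "γ" => Real.eulerMascheroniConstant


private lemma hasDerivAt_log1p {y : ℝ} (hy : -1 < y) :
    HasDerivAt (fun s : ℝ => Real.log (1 + s)) (1 + y)⁻¹ y := by
  have h := ((hasDerivAt_id y).const_add 1).log (by intro h; simp at h; linarith : (1 : ℝ) + id y ≠ 0)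
  simpa [one_div] using h

private lemma aux_nonneg {f f' : ℝ → ℝ} (hd : ∀ y ∈ Set.Ici (0:ℝ), HasDerivAt f (f' y) y)
    (h0 : ∀ y ∈ Set.Ici (0:ℝ), 0 ≤ f' y) {u : ℝ} (hu : 0 ≤ u) : f 0 ≤ f u := by
  have hmono : MonotoneOn f (Set.Ici (0:ℝ)) := by
    apply monotoneOn_of_deriv_nonneg (convex_Ici 0)
      (fun y hy => (hd y hy).continuousAt.continuousWithinAt)
    · intro y hy
      rw [interior_Ici] at hy
      exact (hd y (Set.mem_Ici.2 (le_of_lt (Set.mem_Ioi.1 hy)))).differentiableAt.differentiableWithinAt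
    · intro y hy
      rw [interior_Ici] at hy
      rw [(hd y (Set.mem_Ici.2 (le_of_lt (Set.mem_Ioi.1 hy)))).deriv]
      exact h0 y (Set.mem_Ici.2 (le_of_lt (Set.mem_Ioi.1 hy)))
  exact hmono (Set.mem_Ici.2 (le_refl 0)) (Set.mem_Ici.2 hu) hu

private lemma log1p_le {u : ℝ} (hu : 0 ≤ u) : Real.log (1 + u) ≤ u := by
  have := Real.log_le_sub_one_of_pos (show (0:ℝ) < 1 + u by linarith)
  linarith

private lemma log1p_ge {u : ℝ} (hu : 0 ≤ u) : u - u ^ 2 / 2 ≤ Real.log (1 + u) := by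
  have key : (fun s : ℝ => Real.log (1 + s) - (s - s ^ 2 / 2)) 0 ≤
      (fun s : ℝ => Real.log (1 + s) - (s - s ^ 2 / 2)) u := by
    refine aux_nonneg (f := fun s : ℝ => Real.log (1 + s) - (s - s ^ 2 / 2))
      (f' := fun y => (1 + y)⁻¹ - (1 - y)) ?_ ?_ hu
    · intro y hy
      exact (hasDerivAt_log1p (by simp at hy; linarith)).sub
        (((hasDerivAt_id y).sub (((hasDerivAt_pow 2 y).div_const 2))).congr_deriv (by ring))
    · intro y hy
      simp only [Set.mem_Ici] at hy
      have h1 : (0:ℝ) < 1 + y := by linarith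
      have : (1 + y)⁻¹ - (1 - y) = y ^ 2 / (1 + y) := by field_simp; ring
      rw [this]
      positivity
  simp only [Real.log_one, add_zero] at key
  norm_num at key
  linarith

private lemma log1p_le' {u : ℝ} (hu : 0 ≤ u) : Real.log (1 + u) ≤ u - u ^ 2 / 2 + u ^ 3 / 3 := by
  have key : (fun s : ℝ => (s - s ^ 2 / 2 + s ^ 3 / 3) - Real.log (1 + s)) 0 ≤
      (fun s : ℝ => (s - s ^ 2 / 2 + s ^ 3 / 3) - Real.log (1 + s)) u := by
    refine aux_nonneg (f := fun s : ℝ => (s - s ^ 2 / 2 + s ^ 3 / 3) - Real.log (1 + s))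
      (f' := fun y => (1 - y + y ^ 2) - (1 + y)⁻¹) ?_ ?_ hu
    · intro y hy
      refine HasDerivAt.sub ?_ (hasDerivAt_log1p (by simp at hy; linarith))
      exact (((hasDerivAt_id y).sub ((hasDerivAt_pow 2 y).div_const 2)).add
        ((hasDerivAt_pow 3 y).div_const 3)).congr_deriv (by ring)
    · intro y hy
      simp only [Set.mem_Ici] at hy
      have h1 : (0:ℝ) < 1 + y := by linarith
      have : (1 - y + y ^ 2) - (1 + y)⁻¹ = y ^ 3 / (1 + y) := by field_simp; ring
      rw [this]
      positivity
  simp only [Real.log_one] at key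
  norm_num at key
  linarith

private lemma hsq : Summable (fun n : ℕ => 1 / ((n : ℝ) + 1) ^ 2) := by
  have h : Summable (fun n : ℕ => 1 / (n : ℝ) ^ 2) :=
    Real.summable_one_div_nat_pow.mpr one_lt_two
  have h2 := (summable_nat_add_iff (f := fun n : ℕ => 1 / (n : ℝ) ^ 2) 1).mpr h
  refine h2.congr fun n => ?_
  push_cast
  ring

private lemma aT_nonneg {x : ℝ} (hx : 0 ≤ x) (n : ℕ) :
    0 ≤ x / ((n : ℝ) + 1) - Real.log (1 + x / ((n : ℝ) + 1)) :=
  sub_nonneg.2 (log1p_le (by positivity))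

private lemma aT_le {x : ℝ} (hx : 0 ≤ x) (n : ℕ) :
    x / ((n : ℝ) + 1) - Real.log (1 + x / ((n : ℝ) + 1)) ≤ x ^ 2 / 2 * (1 / ((n : ℝ) + 1) ^ 2) := by
  have hN : (0:ℝ) < (n : ℝ) + 1 := by positivity
  have h := log1p_ge (show 0 ≤ x / ((n : ℝ) + 1) by positivity)
  have e : (x / ((n : ℝ) + 1)) ^ 2 / 2 = x ^ 2 / 2 * (1 / ((n : ℝ) + 1) ^ 2) := by
    rw [div_pow]; ring
  linarith

private lemma summable_aT {x : ℝ} (hx : 0 ≤ x) :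
    Summable (fun n : ℕ => x / ((n : ℝ) + 1) - Real.log (1 + x / ((n : ℝ) + 1))) :=
  Summable.of_nonneg_of_le (aT_nonneg hx) (aT_le hx) (hsq.mul_left (x ^ 2 / 2))

private lemma weierstrassGamma {x : ℝ} (hx : 0 < x) :
    HasSum (fun n : ℕ => x / ((n : ℝ) + 1) - Real.log (1 + x / ((n : ℝ) + 1)))
      (Real.log (Real.Gamma (x + 1)) + γ * x) := by
  have hsummable := summable_aT hx.le
  have key : ∀ᶠ N : ℕ in atTop,
      (∑ n ∈ range N, (x / ((n : ℝ) + 1) - Real.log (1 + x / ((n : ℝ) + 1)))) =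
        x * ((harmonic N : ℝ) - Real.log N) + Real.log x + Real.log (Real.GammaSeq x N) := by
    filter_upwards [eventually_ge_atTop 1] with N hN
    have hNR : (0:ℝ) < (N : ℝ) := by exact_mod_cast Nat.pos_of_ne_zero (by omega)
    have hfac : (0:ℝ) < (N.factorial : ℝ) := by exact_mod_cast N.factorial_pos
    have hprodpos : (0:ℝ) < ∏ j ∈ range (N + 1), (x + (j : ℝ)) :=
      Finset.prod_pos fun j _ => by positivity
    have hGS : Real.log (Real.GammaSeq x N) =
        x * Real.log N + Real.log (N.factorial : ℝ) -
          Real.log (∏ j ∈ range (N + 1), (x + (j : ℝ))) := by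
      rw [Real.GammaSeq, Real.log_div (by positivity) hprodpos.ne',
        Real.log_mul (by positivity) hfac.ne', Real.log_rpow hNR]
    have hlogprod : Real.log (∏ j ∈ range (N + 1), (x + (j : ℝ))) =
        ∑ j ∈ range (N + 1), Real.log (x + (j : ℝ)) :=
      Real.log_prod fun j _ => by positivity
    have hshift : ∑ j ∈ range (N + 1), Real.log (x + (j : ℝ)) =
        Real.log x + ∑ n ∈ range N, Real.log (x + ((n : ℝ) + 1)) := by
      rw [Finset.sum_range_succ', add_comm]
      congr 1
      · simp
      · exact Finset.sum_congr rfl fun n _ => by push_cast; ring_nf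
    have hfaclog : Real.log (N.factorial : ℝ) = ∑ n ∈ range N, Real.log ((n : ℝ) + 1) := by
      have hcast : (N.factorial : ℝ) = ∏ n ∈ range N, ((n : ℝ) + 1) := by
        rw [← Finset.prod_range_add_one_eq_factorial]
        push_cast
        rfl
      rw [hcast, Real.log_prod fun j _ => by positivity]
    have hharm : (harmonic N : ℝ) = ∑ n ∈ range N, 1 / ((n : ℝ) + 1) := by
      rw [harmonic]
      push_cast
      simp [one_div]
    have hterm : ∀ n ∈ range N, x / ((n : ℝ) + 1) - Real.log (1 + x / ((n : ℝ) + 1)) =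
        x * (1 / ((n : ℝ) + 1)) - (Real.log (x + ((n : ℝ) + 1)) - Real.log ((n : ℝ) + 1)) := by
      intro n _
      have h1 : (0:ℝ) < (n : ℝ) + 1 := by positivity
      rw [show 1 + x / ((n : ℝ) + 1) = (x + ((n : ℝ) + 1)) / ((n : ℝ) + 1) from by field_simp; ring,
        Real.log_div (by positivity) h1.ne']
      ring
    rw [Finset.sum_congr rfl hterm, Finset.sum_sub_distrib, ← Finset.mul_sum,
      Finset.sum_sub_distrib, hGS, hlogprod, hshift, hfaclog, hharm]
    ring
  have hlim : Tendsto (fun N : ℕ => x * ((harmonic N : ℝ) - Real.log N) + Real.log x +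
      Real.log (Real.GammaSeq x N)) atTop
      (𝓝 (x * γ + Real.log x + Real.log (Real.Gamma x))) := by
    refine Tendsto.add (Tendsto.add_const _ (Real.tendsto_harmonic_sub_log.const_mul x)) ?_
    exact ((Real.continuousAt_log (Real.Gamma_pos_of_pos hx).ne').tendsto.comp
      (Real.GammaSeq_tendsto_Gamma x))
  have hval : x * γ + Real.log x + Real.log (Real.Gamma x) =
      Real.log (Real.Gamma (x + 1)) + γ * x := by
    rw [Real.Gamma_add_one hx.ne', Real.log_mul hx.ne' (Real.Gamma_pos_of_pos hx).ne']
    ring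
  rw [hval] at hlim
  have hps := Tendsto.congr' (key.mono fun N h => h.symm) hlim
  have h2 := hsummable.hasSum
  rwa [tendsto_nhds_unique h2.tendsto_sum_nat hps] at h2

/-- `GG z` is the Barnes G-function evaluated at `z + 1`, defined by the Weierstrass
product. -/
noncomputable def GG (z : ℝ) : ℝ :=
  (2 * π) ^ (z / 2) *
    Real.exp (-(z * (z + 1)) / 2 - Real.eulerMascheroniConstant * z ^ 2 / 2) *
    ∏' n : ℕ, (1 + z / (n + 1)) ^ (n + 1) * Real.exp (-z + z ^ 2 / (2 * (n + 1)))

private lemma bT_nonneg {x : ℝ} (hx : 0 ≤ x) (n : ℕ) :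
    0 ≤ ((n : ℝ) + 1) * Real.log (1 + x / ((n : ℝ) + 1)) - x + x ^ 2 / (2 * ((n : ℝ) + 1)) := by
  have hN : (0:ℝ) < (n : ℝ) + 1 := by positivity
  have h := log1p_ge (show 0 ≤ x / ((n : ℝ) + 1) by positivity)
  have h2 := mul_le_mul_of_nonneg_left h hN.le
  have e : ((n : ℝ) + 1) * (x / ((n : ℝ) + 1) - (x / ((n : ℝ) + 1)) ^ 2 / 2) =
      x - x ^ 2 / (2 * ((n : ℝ) + 1)) := by
    field_simp
  linarith

private lemma bT_le {x : ℝ} (hx : 0 ≤ x) (n : ℕ) :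
    ((n : ℝ) + 1) * Real.log (1 + x / ((n : ℝ) + 1)) - x + x ^ 2 / (2 * ((n : ℝ) + 1)) ≤
      x ^ 3 / 3 * (1 / ((n : ℝ) + 1) ^ 2) := by
  have hN : (0:ℝ) < (n : ℝ) + 1 := by positivity
  have h := log1p_le' (show 0 ≤ x / ((n : ℝ) + 1) by positivity)
  have h2 := mul_le_mul_of_nonneg_left h hN.le
  have e : ((n : ℝ) + 1) * (x / ((n : ℝ) + 1) - (x / ((n : ℝ) + 1)) ^ 2 / 2 +
      (x / ((n : ℝ) + 1)) ^ 3 / 3) =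
      x - x ^ 2 / (2 * ((n : ℝ) + 1)) + x ^ 3 / 3 * (1 / ((n : ℝ) + 1) ^ 2) := by
    field_simp
  linarith

private lemma summable_bT {x : ℝ} (hx : 0 ≤ x) :
    Summable (fun n : ℕ =>
      ((n : ℝ) + 1) * Real.log (1 + x / ((n : ℝ) + 1)) - x + x ^ 2 / (2 * ((n : ℝ) + 1))) :=
  Summable.of_nonneg_of_le (bT_nonneg hx) (bT_le hx) (hsq.mul_left (x ^ 3 / 3))

private lemma logGG {x : ℝ} (hx : 0 < x) :
    Real.log (GG x) = x / 2 * Real.log (2 * π) +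
      (-(x * (x + 1)) / 2 - γ * x ^ 2 / 2) +
      ∑' n : ℕ, (((n : ℝ) + 1) * Real.log (1 + x / ((n : ℝ) + 1)) - x +
        x ^ 2 / (2 * ((n : ℝ) + 1))) := by
  set B : ℕ → ℝ := fun n =>
    ((n : ℝ) + 1) * Real.log (1 + x / ((n : ℝ) + 1)) - x + x ^ 2 / (2 * ((n : ℝ) + 1)) with hBdef
  have hB : Summable B := summable_bT hx.le
  have hterm : ∀ n : ℕ, (1 + x / ((n : ℝ) + 1)) ^ (n + 1) *
      Real.exp (-x + x ^ 2 / (2 * ((n : ℝ) + 1))) = Real.exp (B n) := by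
    intro n
    have h1 : (0:ℝ) < 1 + x / ((n : ℝ) + 1) := by positivity
    have e1 : Real.exp (((n : ℝ) + 1) * Real.log (1 + x / ((n : ℝ) + 1))) =
        (1 + x / ((n : ℝ) + 1)) ^ (n + 1) := by
      rw [show ((n : ℝ) + 1) = ((n + 1 : ℕ) : ℝ) from by push_cast; ring,
        Real.exp_nat_mul, Real.exp_log (by exact_mod_cast h1)]
    have e2 : B n = ((n : ℝ) + 1) * Real.log (1 + x / ((n : ℝ) + 1)) +
        (-x + x ^ 2 / (2 * ((n : ℝ) + 1))) := by simp only [hBdef]; ring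
    conv_rhs => rw [e2, Real.exp_add, e1]
  have hprod : HasProd (fun n : ℕ => (1 + x / ((n : ℝ) + 1)) ^ (n + 1) *
      Real.exp (-x + x ^ 2 / (2 * ((n : ℝ) + 1)))) (Real.exp (∑' n, B n)) := by
    have h2 := hB.hasSum.rexp
    simp only [hterm]
    exact h2
  have hGG : GG x = (2 * π) ^ (x / 2) *
      Real.exp (-(x * (x + 1)) / 2 - γ * x ^ 2 / 2) * Real.exp (∑' n, B n) := by
    rw [GG, hprod.tprod_eq]
  rw [hGG, Real.log_mul (by positivity) (Real.exp_ne_zero _),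
    Real.log_mul (Real.rpow_pos_of_pos (by positivity) _).ne' (Real.exp_ne_zero _),
    Real.log_rpow (by positivity), Real.log_exp, Real.log_exp]

/-- The logarithmic derivative of the Barnes G-function:
`d/dz log G(z+1) = (1/2) log(2π) - 1/2 - z + z · d/dz log Γ(z+1)` for `z > 0`. -/
theorem barnesG_log_deriv (z : ℝ) (hz : 0 < z) :
    deriv (fun t => Real.log (GG t)) z =
      (1 / 2) * Real.log (2 * π) - 1 / 2 - z +
        z * deriv (fun t => Real.log (Real.Gamma (t + 1))) z := by
  have hopen : IsOpen (Set.Ioo (0:ℝ) (z + 1)) := isOpen_Ioo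
  have hconn : IsPreconnected (Set.Ioo (0:ℝ) (z + 1)) := (convex_Ioo _ _).isPreconnected
  have hzt : z ∈ Set.Ioo (0:ℝ) (z + 1) := ⟨hz, by linarith⟩
  -- Gamma side
  have hderivA : ∀ (n : ℕ) (y : ℝ), y ∈ Set.Ioo (0:ℝ) (z + 1) →
      HasDerivAt (fun s : ℝ => s / ((n : ℝ) + 1) - Real.log (1 + s / ((n : ℝ) + 1)))
        (y / (((n : ℝ) + 1) * (y + (n : ℝ) + 1))) y := by
    intro n y hy
    have hy0 : 0 < y := hy.1
    have hN : (0:ℝ) < (n : ℝ) + 1 := by positivity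
    have h1 : (0:ℝ) < 1 + y / ((n : ℝ) + 1) := by positivity
    have hd1 : HasDerivAt (fun s : ℝ => s / ((n : ℝ) + 1)) (1 / ((n : ℝ) + 1)) y := by
      simpa using (hasDerivAt_id y).div_const ((n : ℝ) + 1)
    have hd2 : HasDerivAt (fun s : ℝ => Real.log (1 + s / ((n : ℝ) + 1)))
        ((1 / ((n : ℝ) + 1)) / (1 + y / ((n : ℝ) + 1))) y := (hd1.const_add 1).log h1.ne'
    refine (hd1.sub hd2).congr_deriv ?_
    field_simp
    try ring
    try tauto
  have hboundA : ∀ (n : ℕ) (y : ℝ), y ∈ Set.Ioo (0:ℝ) (z + 1) →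
      ‖y / (((n : ℝ) + 1) * (y + (n : ℝ) + 1))‖ ≤ (z + 1) * (1 / ((n : ℝ) + 1) ^ 2) := by
    intro n y hy
    obtain ⟨hy0, hy1⟩ := hy
    have hN : (0:ℝ) < (n : ℝ) + 1 := by positivity
    rw [Real.norm_eq_abs, abs_of_nonneg (by positivity),
      show (z + 1) * (1 / ((n : ℝ) + 1) ^ 2) = (z + 1) / ((n : ℝ) + 1) ^ 2 from by ring]
    apply div_le_div₀ (by linarith) hy1.le (by positivity)
    nlinarith
  have hA := hasDerivAt_tsum_of_isPreconnected (hsq.mul_left (z + 1)) hopen hconn hderivA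
    hboundA hzt (weierstrassGamma hz).summable hzt
  have hGammaEq : (fun y : ℝ => Real.log (Real.Gamma (y + 1))) =ᶠ[𝓝 z]
      (fun y : ℝ => -(γ * y) +
        ∑' n : ℕ, (y / ((n : ℝ) + 1) - Real.log (1 + y / ((n : ℝ) + 1)))) := by
    filter_upwards [eventually_gt_nhds hz] with y hy
    rw [(weierstrassGamma hy).tsum_eq]
    ring
  have hpoly : HasDerivAt (fun y : ℝ => -(γ * y)) (-γ) z := by
    exact ((hasDerivAt_id' z).const_mul γ).neg.congr_deriv (by ring)
  have hGamma : HasDerivAt (fun y : ℝ => Real.log (Real.Gamma (y + 1)))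
      (-γ + ∑' n : ℕ, z / (((n : ℝ) + 1) * (z + (n : ℝ) + 1))) z :=
    (hpoly.add hA).congr_of_eventuallyEq hGammaEq
  -- Barnes side
  have hderivB : ∀ (n : ℕ) (y : ℝ), y ∈ Set.Ioo (0:ℝ) (z + 1) →
      HasDerivAt (fun s : ℝ => ((n : ℝ) + 1) * Real.log (1 + s / ((n : ℝ) + 1)) - s +
          s ^ 2 / (2 * ((n : ℝ) + 1)))
        (y ^ 2 / (((n : ℝ) + 1) * (y + (n : ℝ) + 1))) y := by
    intro n y hy
    have hy0 : 0 < y := hy.1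
    have hN : (0:ℝ) < (n : ℝ) + 1 := by positivity
    have h1 : (0:ℝ) < 1 + y / ((n : ℝ) + 1) := by positivity
    have hd1 : HasDerivAt (fun s : ℝ => s / ((n : ℝ) + 1)) (1 / ((n : ℝ) + 1)) y := by
      simpa using (hasDerivAt_id y).div_const ((n : ℝ) + 1)
    have hd2 : HasDerivAt (fun s : ℝ => ((n : ℝ) + 1) * Real.log (1 + s / ((n : ℝ) + 1)))
        (((n : ℝ) + 1) * ((1 / ((n : ℝ) + 1)) / (1 + y / ((n : ℝ) + 1)))) y :=
      ((hd1.const_add 1).log h1.ne').const_mul _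
    have hd3 : HasDerivAt (fun s : ℝ => s ^ 2 / (2 * ((n : ℝ) + 1)))
        ((2 * y ^ 1) / (2 * ((n : ℝ) + 1))) y := (hasDerivAt_pow 2 y).div_const _
    refine ((hd2.sub (hasDerivAt_id y)).add hd3).congr_deriv ?_
    field_simp
    ring
  have hboundB : ∀ (n : ℕ) (y : ℝ), y ∈ Set.Ioo (0:ℝ) (z + 1) →
      ‖y ^ 2 / (((n : ℝ) + 1) * (y + (n : ℝ) + 1))‖ ≤ (z + 1) ^ 2 * (1 / ((n : ℝ) + 1) ^ 2) := by
    intro n y hy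
    obtain ⟨hy0, hy1⟩ := hy
    have hN : (0:ℝ) < (n : ℝ) + 1 := by positivity
    rw [Real.norm_eq_abs, abs_of_nonneg (by positivity),
      show (z + 1) ^ 2 * (1 / ((n : ℝ) + 1) ^ 2) = (z + 1) ^ 2 / ((n : ℝ) + 1) ^ 2 from by ring]
    apply div_le_div₀ (by positivity) ?_ (by positivity) ?_
    · nlinarith
    · nlinarith
  have hB := hasDerivAt_tsum_of_isPreconnected (hsq.mul_left ((z + 1) ^ 2)) hopen hconn hderivB
    hboundB hzt (summable_bT hz.le) hzt
  have hGGEq : (fun y : ℝ => Real.log (GG y)) =ᶠ[𝓝 z]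
      (fun y : ℝ => y / 2 * Real.log (2 * π) + (-(y * (y + 1)) / 2 - γ * y ^ 2 / 2) +
        ∑' n : ℕ, (((n : ℝ) + 1) * Real.log (1 + y / ((n : ℝ) + 1)) - y +
          y ^ 2 / (2 * ((n : ℝ) + 1)))) := by
    filter_upwards [eventually_gt_nhds hz] with y hy
    exact logGG hy
  have hpoly2 : HasDerivAt (fun y : ℝ => y / 2 * Real.log (2 * π) +
      (-(y * (y + 1)) / 2 - γ * y ^ 2 / 2))
      ((1 / 2) * Real.log (2 * π) - 1 / 2 - z - γ * z) z := by
    have p1 : HasDerivAt (fun y : ℝ => y / 2 * Real.log (2 * π))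
        ((1 / 2) * Real.log (2 * π)) z := by
      simpa using ((hasDerivAt_id z).div_const 2).mul_const (Real.log (2 * π))
    have p2 : HasDerivAt (fun y : ℝ => -(y * (y + 1)))
        (-(1 * (z + 1) + z * 1)) z := ((hasDerivAt_id z).mul ((hasDerivAt_id z).add_const 1)).neg
    have p3 : HasDerivAt (fun y : ℝ => γ * y ^ 2) (γ * (2 * z ^ 1)) z :=
      (hasDerivAt_pow 2 z).const_mul γ
    refine (p1.add ((p2.div_const 2).sub (p3.div_const 2))).congr_deriv ?_
    ring
  have hGG' : HasDerivAt (fun y : ℝ => Real.log (GG y))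
      ((1 / 2) * Real.log (2 * π) - 1 / 2 - z - γ * z +
        ∑' n : ℕ, z ^ 2 / (((n : ℝ) + 1) * (z + (n : ℝ) + 1))) z :=
    (hpoly2.add hB).congr_of_eventuallyEq hGGEq
  rw [hGG'.deriv, hGamma.deriv]
  have hts : ∑' n : ℕ, z ^ 2 / (((n : ℝ) + 1) * (z + (n : ℝ) + 1)) =
      z * ∑' n : ℕ, z / (((n : ℝ) + 1) * (z + (n : ℝ) + 1)) := by
    rw [← tsum_mul_left]
    exact tsum_congr fun n => by rw [pow_two, mul_div_assoc]
  rw [hts]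
  ring
end

section
/- For real z with |z| < 1, d/dz log(G(1+z)/G(1-z)) = log(2π) - π z · cot(π z). -/
open Real

open Filter Topology

lemma m_ge_one (n : ℕ) : (1:ℝ) ≤ (n:ℝ)+1 := by
  have := Nat.cast_nonneg (α := ℝ) n; linarith

lemma summable_inv_sq (c : ℝ) : Summable (fun n : ℕ => c / ((n:ℝ)+1)^2) := by
  have h : Summable (fun n : ℕ => 1 / ((n:ℝ)+1)^2) := by
    have := (Real.summable_one_div_nat_pow (p := 2)).mpr one_lt_two
    have h2 := (summable_nat_add_iff (f := fun n : ℕ => 1 / (n:ℝ)^2) 1).mpr this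
    simpa [Nat.cast_add] using h2
  simpa [div_eq_mul_inv, mul_comm] using h.mul_left c

lemma abs_div_le {t : ℝ} (n : ℕ) : |t/((n:ℝ)+1)| ≤ |t| := by
  rw [abs_div, abs_of_pos (by positivity : (0:ℝ) < (n:ℝ)+1)]
  exact div_le_self (abs_nonneg t) (m_ge_one n)

lemma one_add_div_pos {t : ℝ} (ht : |t| < 1) (n : ℕ) : 0 < 1 + t/((n:ℝ)+1) := by
  have : |t/((n:ℝ)+1)| < 1 := lt_of_le_of_lt (abs_div_le n) ht
  linarith [(abs_lt.mp this).1]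

lemma one_sub_div_pos {t : ℝ} (ht : |t| < 1) (n : ℕ) : 0 < 1 - t/((n:ℝ)+1) := by
  have := one_add_div_pos (t := -t) (by simpa using ht) n
  simpa [neg_div, sub_eq_add_neg] using this

lemma log_one_sub_est {x : ℝ} (h : |x| < 1) :
    |Real.log (1-x) + x + x^2/2| ≤ |x|^3/(1-|x|) := by
  have := Real.abs_log_sub_add_sum_range_le h 2
  rw [Finset.sum_range_succ, Finset.sum_range_one] at this
  push_cast at this
  convert this using 2 <;> ring

lemma log_one_add_est {x : ℝ} (h : |x| < 1) :
    |Real.log (1+x) - x + x^2/2| ≤ |x|^3/(1-|x|) := by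
  have h2 := log_one_sub_est (x := -x) (by simpa using h)
  rw [show (1:ℝ) - -x = 1 + x by ring, abs_neg] at h2
  have e : Real.log (1+x) - x + x^2/2 = Real.log (1+x) + -x + (-x)^2/2 := by ring
  rw [e]; exact h2

lemma log_ratio_est {x : ℝ} (h : |x| < 1) :
    |Real.log (1+x) - Real.log (1-x) - 2*x| ≤ 2*|x|^3/(1-|x|) := by
  have h1 := log_one_add_est h
  have h2 := log_one_sub_est h
  have : Real.log (1+x) - Real.log (1-x) - 2*x
      = (Real.log (1+x) - x + x^2/2) - (Real.log (1-x) + x + x^2/2) := by ring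
  rw [this]
  calc _ ≤ |Real.log (1+x) - x + x^2/2| + |Real.log (1-x) + x + x^2/2| := abs_sub _ _
    _ ≤ |x|^3/(1-|x|) + |x|^3/(1-|x|) := add_le_add h1 h2
    _ = 2*|x|^3/(1-|x|) := by ring

noncomputable def lfun (t : ℝ) (n : ℕ) : ℝ :=
  ((n:ℝ)+1) * Real.log (1 + t/((n:ℝ)+1)) + (-t + t^2/(2*((n:ℝ)+1)))

noncomputable def dfun (t : ℝ) (n : ℕ) : ℝ :=
  ((n:ℝ)+1) * (Real.log (1 + t/((n:ℝ)+1)) - Real.log (1 - t/((n:ℝ)+1))) - 2*t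

lemma est_chain {t : ℝ} (ht : |t| < 1) (n : ℕ) {y c : ℝ} (hc : 0 ≤ c)
    (hy : |y| ≤ c * |t/((n:ℝ)+1)|^3 / (1 - |t/((n:ℝ)+1)|)) :
    ((n:ℝ)+1) * |y| ≤ (c * |t|^3/(1-|t|)) / ((n:ℝ)+1)^2 := by
  set m : ℝ := (n:ℝ)+1 with hm
  have hm1 : (1:ℝ) ≤ m := m_ge_one n
  have hm0 : (0:ℝ) < m := by linarith
  have hxt : |t/m| ≤ |t| := abs_div_le n
  have ht1 : (0:ℝ) < 1 - |t| := by linarith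
  have habs : |t/m| = |t|/m := by rw [abs_div, abs_of_pos hm0]
  have h2 : (0:ℝ) < 1 - |t|/m := by
    rw [← habs]; linarith
  have key : c * |t/m|^3 / (1 - |t/m|) ≤ (c * |t|^3/(1-|t|)) / m^3 := by
    calc c * |t/m|^3 / (1 - |t/m|) = (c*|t|^3) / (m^3*(1-|t|/m)) := by
          rw [habs]; field_simp
      _ ≤ (c*|t|^3) / ((1-|t|)*m^3) := by
          rw [div_le_div_iff₀ (by positivity) (by positivity)]
          have h3 : (1-|t|)*m^3 ≤ (1-|t|/m)*m^3 :=
            mul_le_mul_of_nonneg_right (by linarith) (by positivity)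
          nlinarith [mul_le_mul_of_nonneg_left h3 (by positivity : (0:ℝ) ≤ c*|t|^3)]
      _ = (c * |t|^3/(1-|t|)) / m^3 := (div_div _ _ _).symm
  calc m * |y| ≤ m * ((c * |t|^3/(1-|t|)) / m^3) :=
        mul_le_mul_of_nonneg_left (le_trans hy key) (le_of_lt hm0)
    _ = (c * |t|^3/(1-|t|)) / m^2 := by field_simp

lemma lfun_bound {t : ℝ} (ht : |t| < 1) (n : ℕ) :
    |lfun t n| ≤ (1 * |t|^3/(1-|t|)) / ((n:ℝ)+1)^2 := by
  have hm0 : (0:ℝ) < (n:ℝ)+1 := by positivity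
  have hx : |t/((n:ℝ)+1)| < 1 := lt_of_le_of_lt (abs_div_le n) ht
  have e : lfun t n = ((n:ℝ)+1) *
      (Real.log (1 + t/((n:ℝ)+1)) - t/((n:ℝ)+1) + (t/((n:ℝ)+1))^2/2) := by
    unfold lfun; field_simp; ring
  rw [e, abs_mul, abs_of_pos hm0]
  exact est_chain ht n zero_le_one (by simpa using log_one_add_est hx)

lemma dfun_bound {t : ℝ} (ht : |t| < 1) (n : ℕ) :
    |dfun t n| ≤ (2 * |t|^3/(1-|t|)) / ((n:ℝ)+1)^2 := by
  have hm0 : (0:ℝ) < (n:ℝ)+1 := by positivity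
  have hx : |t/((n:ℝ)+1)| < 1 := lt_of_le_of_lt (abs_div_le n) ht
  have e : dfun t n = ((n:ℝ)+1) *
      (Real.log (1 + t/((n:ℝ)+1)) - Real.log (1 - t/((n:ℝ)+1)) - 2*(t/((n:ℝ)+1))) := by
    unfold dfun; field_simp
  rw [e, abs_mul, abs_of_pos hm0]
  exact est_chain ht n zero_le_two (log_ratio_est hx)

lemma summable_lfun {t : ℝ} (ht : |t| < 1) : Summable (lfun t) :=
  Summable.of_norm_bounded (summable_inv_sq (1 * |t|^3/(1-|t|))) (lfun_bound ht)

lemma summable_dfun {t : ℝ} (ht : |t| < 1) : Summable (dfun t) :=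
  Summable.of_norm_bounded (summable_inv_sq (2 * |t|^3/(1-|t|))) (dfun_bound ht)

lemma lfun_sub (t : ℝ) (n : ℕ) : lfun t n - lfun (-t) n = dfun t n := by
  unfold lfun dfun
  rw [show -t/((n:ℝ)+1) = -(t/((n:ℝ)+1)) by ring,
    show (1:ℝ) + -(t/((n:ℝ)+1)) = 1 - t/((n:ℝ)+1) by ring]
  ring


lemma GG_eq {t : ℝ} (ht : |t| < 1) :
    GG t = (2 * π) ^ (t / 2) *
      Real.exp (-(t * (t + 1)) / 2 - Real.eulerMascheroniConstant * t ^ 2 / 2 +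
        ∑' n, lfun t n) := by
  have hp : HasProd (Real.exp ∘ lfun t) (Real.exp (∑' n, lfun t n)) :=
    (summable_lfun ht).hasSum.rexp
  have he : (Real.exp ∘ lfun t) =
      fun n : ℕ => (1 + t / (n + 1)) ^ (n + 1) * Real.exp (-t + t ^ 2 / (2 * (n + 1))) := by
    funext n
    have h1 : (0:ℝ) < 1 + t/((n:ℝ)+1) := one_add_div_pos ht n
    simp only [Function.comp_apply, lfun, Real.exp_add]
    congr 1
    rw [show ((n:ℝ)+1) = ((n+1 : ℕ) : ℝ) by push_cast; ring, Real.exp_nat_mul,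
      Real.exp_log (show (0:ℝ) < 1 + t/((n+1:ℕ):ℝ) by push_cast; exact h1)]
  rw [he] at hp
  unfold GG
  rw [hp.tprod_eq, Real.exp_add, mul_assoc]

lemma key_formula {t : ℝ} (ht : |t| < 1) :
    Real.log (GG t / GG (-t)) = t * Real.log (2*π) - t + ∑' n, dfun t n := by
  have ht' : |(-t)| < 1 := by simpa using ht
  have hA : (0:ℝ) < 2*π := by positivity
  have h1 := GG_eq ht
  have h2 := GG_eq ht'
  set S1 := ∑' n, lfun t n
  set S2 := ∑' n, lfun (-t) n
  have hSd : S1 - S2 = ∑' n, dfun t n := by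
    rw [← Summable.tsum_sub (summable_lfun ht) (summable_lfun ht')]
    exact tsum_congr fun n => lfun_sub t n
  have e : GG t / GG (-t) = (2*π) ^ (t : ℝ) * Real.exp (-t + (S1 - S2)) := by
    rw [h1, h2, mul_div_mul_comm, ← Real.rpow_sub hA, ← Real.exp_sub]
    congr 1
    · congr 1; ring
    · ring
  rw [e, Real.log_mul (by positivity) (Real.exp_ne_zero _), Real.log_rpow hA,
    Real.log_exp, hSd]
  ring

lemma hasDerivAt_dfun (n : ℕ) {y : ℝ} (hy : |y| < 1) :
    HasDerivAt (fun t => dfun t n) (2*y^2/(((n:ℝ)+1)^2 - y^2)) y := by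
  set m : ℝ := (n:ℝ)+1 with hm
  have hm1 : (1:ℝ) ≤ m := m_ge_one n
  have hm0 : (0:ℝ) < m := by linarith
  have h1 : (0:ℝ) < 1 + y/m := one_add_div_pos hy n
  have h2 : (0:ℝ) < 1 - y/m := one_sub_div_pos hy n
  have hy1 : y^2 < 1 := by nlinarith [(abs_lt.mp hy).1, (abs_lt.mp hy).2]
  have hden : (0:ℝ) < m^2 - y^2 := by nlinarith
  have hmy : (0:ℝ) < m + y := by nlinarith [(abs_lt.mp hy).1]
  have hmy' : (0:ℝ) < m - y := by nlinarith [(abs_lt.mp hy).2]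
  have d1 : HasDerivAt (fun t : ℝ => 1 + t/m) (1/m) y := by
    simpa using ((hasDerivAt_id y).div_const m).const_add 1
  have d2 : HasDerivAt (fun t : ℝ => 1 - t/m) (-(1/m)) y := by
    simpa using ((hasDerivAt_id y).div_const m).const_sub 1
  have dl1 := d1.log (ne_of_gt h1)
  have dl2 := d2.log (ne_of_gt h2)
  have dd := ((dl1.sub dl2).const_mul m).sub ((hasDerivAt_id y).const_mul 2)
  have : HasDerivAt (fun t => dfun t n)
      (m * (1/m/(1+y/m) - -(1/m)/(1-y/m)) - 2*1) y := by
    unfold dfun; rw [← hm]; exact dd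
  convert this using 1
  field_simp [hm0.ne', h1.ne', h2.ne', hmy.ne', hmy'.ne']
  ring

lemma ball_facts {z : ℝ} (hz : |z| < 1) :
    |z| < (1+|z|)/2 ∧ (1+|z|)/2 < 1 ∧ (0:ℝ) < (1+|z|)/2 := by
  have h0 := abs_nonneg z
  refine ⟨by linarith, by linarith, by linarith⟩

lemma deriv_bound {r : ℝ} (hr1 : r < 1) (hr0 : 0 < r) {y : ℝ} (hy : |y| < r) (n : ℕ) :
    (((n:ℝ)+1)^2 - y^2) ≥ ((n:ℝ)+1)^2 * (1 - r^2) ∧ (0:ℝ) < ((n:ℝ)+1)^2 - y^2 := by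
  have hm1 : (1:ℝ) ≤ (n:ℝ)+1 := m_ge_one n
  have hy2 : y^2 < r^2 := by nlinarith [abs_nonneg y, sq_abs y]
  have hr2 : r^2 < 1 := by nlinarith
  have hm2 : (1:ℝ) ≤ ((n:ℝ)+1)^2 := by nlinarith
  have hrr := mul_le_mul_of_nonneg_right hm2 (sq_nonneg r)
  constructor
  · nlinarith
  · nlinarith

lemma hasDerivAt_tsum_dfun {z : ℝ} (hz : |z| < 1) :
    HasDerivAt (fun t => ∑' n, dfun t n) (∑' n : ℕ, 2*z^2/(((n:ℝ)+1)^2 - z^2)) z := by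
  obtain ⟨hzr, hr1, hr0⟩ := ball_facts hz
  set r : ℝ := (1+|z|)/2 with hrdef
  have hr2 : (0:ℝ) < 1 - r^2 := by nlinarith
  apply hasDerivAt_tsum_of_isPreconnected
    (u := fun n : ℕ => (2*r^2/(1-r^2)) / ((n:ℝ)+1)^2)
    (summable_inv_sq _) Metric.isOpen_ball (convex_ball (0:ℝ) r).isPreconnected
    (g' := fun n y => 2*y^2/(((n:ℝ)+1)^2 - y^2))
  · intro n y hyb
    rw [mem_ball_zero_iff] at hyb
    exact hasDerivAt_dfun n (lt_trans hyb hr1)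
  · intro n y hyb
    rw [mem_ball_zero_iff] at hyb
    obtain ⟨hge, hpos⟩ := deriv_bound hr1 hr0 hyb n
    have hm1 : (1:ℝ) ≤ (n:ℝ)+1 := m_ge_one n
    have hval : (0:ℝ) ≤ 2*y^2/(((n:ℝ)+1)^2 - y^2) := by positivity
    rw [Real.norm_eq_abs, abs_of_nonneg hval]
    have h1 : 2*y^2/(((n:ℝ)+1)^2 - y^2) ≤ 2*r^2 / (((n:ℝ)+1)^2 * (1-r^2)) := by
      apply div_le_div₀ (by positivity) (by rw [Real.norm_eq_abs] at hyb; nlinarith [sq_abs y, abs_nonneg y]) (by positivity) hge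
    calc 2*y^2/(((n:ℝ)+1)^2 - y^2) ≤ 2*r^2 / (((n:ℝ)+1)^2 * (1-r^2)) := h1
      _ = (2*r^2/(1-r^2)) / ((n:ℝ)+1)^2 := by
          rw [div_div]; congr 1; ring
  · exact mem_ball_zero_iff.mpr hzr
  · exact summable_dfun hz
  · exact mem_ball_zero_iff.mpr hzr

noncomputable def efun (t : ℝ) (n : ℕ) : ℝ := Real.log (1 - t^2/((n:ℝ)+1)^2)

lemma efun_facts {t : ℝ} (ht : |t| < 1) (n : ℕ) :
    t^2/((n:ℝ)+1)^2 ≤ t^2 ∧ t^2 < 1 ∧ (0:ℝ) < 1 - t^2/((n:ℝ)+1)^2 := by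
  have hm1 : (1:ℝ) ≤ (n:ℝ)+1 := m_ge_one n
  have hm2 : (1:ℝ) ≤ ((n:ℝ)+1)^2 := by nlinarith
  have ht2 : t^2 < 1 := by nlinarith [sq_abs t, abs_nonneg t]
  have h1 : t^2/((n:ℝ)+1)^2 ≤ t^2 := div_le_self (sq_nonneg t) hm2
  exact ⟨h1, ht2, by nlinarith⟩

lemma efun_bound {t : ℝ} (ht : |t| < 1) (n : ℕ) :
    |efun t n| ≤ (t^2/(1-t^2)) / ((n:ℝ)+1)^2 := by
  obtain ⟨h1, ht2, hpos⟩ := efun_facts ht n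
  set y : ℝ := t^2/((n:ℝ)+1)^2 with hy
  have hy0 : 0 ≤ y := by positivity
  have hy1 : y < 1 := lt_of_le_of_lt h1 ht2
  have hle : Real.log (1 - y) ≤ 0 :=
    Real.log_nonpos (by linarith) (by linarith)
  have hlb : -Real.log (1 - y) ≤ y/(1-y) := by
    have := Real.log_le_sub_one_of_pos (show (0:ℝ) < (1-y)⁻¹ by positivity)
    rw [Real.log_inv] at this
    have e : (1-y)⁻¹ - 1 = y/(1-y) := by field_simp; ring
    linarith [e ▸ this]
  have hfrac : y/(1-y) ≤ (t^2/(1-t^2)) / ((n:ℝ)+1)^2 := by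
    have h2 : 1 - t^2 ≤ 1 - y := by linarith
    have e : (t^2/(1-t^2)) / ((n:ℝ)+1)^2 = y / (1-t^2) := by
      rw [hy]; field_simp
    rw [e]
    apply div_le_div_of_nonneg_left hy0 (by linarith) h2
  rw [efun, abs_of_nonpos hle]
  exact le_trans hlb hfrac

lemma summable_efun {t : ℝ} (ht : |t| < 1) : Summable (efun t) :=
  Summable.of_norm_bounded (summable_inv_sq (t^2/(1-t^2))) (efun_bound ht)

lemma hasDerivAt_efun (n : ℕ) {y : ℝ} (hy : |y| < 1) :
    HasDerivAt (fun t => efun t n) (-2*y/(((n:ℝ)+1)^2 - y^2)) y := by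
  obtain ⟨h1, hy2, hpos⟩ := efun_facts hy n
  set m : ℝ := (n:ℝ)+1 with hm
  have hm1 : (1:ℝ) ≤ m := m_ge_one n
  have hm0 : (0:ℝ) < m := by linarith
  have hden : (0:ℝ) < m^2 - y^2 := by nlinarith
  have d1 : HasDerivAt (fun t : ℝ => 1 - t^2/m^2) (-(2*y/m^2)) y := by
    have := ((hasDerivAt_pow 2 y).div_const (m^2)).const_sub 1
    simpa using this
  have dl := d1.log (ne_of_gt hpos)
  have : HasDerivAt (fun t => efun t n) (-(2*y/m^2) / (1 - y^2/m^2)) y := by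
    unfold efun; rw [← hm]; exact dl
  convert this using 1
  rw [show (1:ℝ) - y^2/m^2 = (m^2-y^2)/m^2 by field_simp]
  field_simp

lemma hasDerivAt_tsum_efun {z : ℝ} (hz : |z| < 1) :
    HasDerivAt (fun t => ∑' n, efun t n) (∑' n : ℕ, -2*z/(((n:ℝ)+1)^2 - z^2)) z := by
  obtain ⟨hzr, hr1, hr0⟩ := ball_facts hz
  set r : ℝ := (1+|z|)/2 with hrdef
  have hr2 : (0:ℝ) < 1 - r^2 := by nlinarith
  apply hasDerivAt_tsum_of_isPreconnected
    (u := fun n : ℕ => (2*r/(1-r^2)) / ((n:ℝ)+1)^2)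
    (summable_inv_sq _) Metric.isOpen_ball (convex_ball (0:ℝ) r).isPreconnected
    (g' := fun n y => -2*y/(((n:ℝ)+1)^2 - y^2))
  · intro n y hyb
    rw [mem_ball_zero_iff] at hyb
    exact hasDerivAt_efun n (lt_trans hyb hr1)
  · intro n y hyb
    rw [mem_ball_zero_iff, Real.norm_eq_abs] at hyb
    obtain ⟨hge, hpos⟩ := deriv_bound hr1 hr0 hyb n
    have hm1 : (1:ℝ) ≤ (n:ℝ)+1 := m_ge_one n
    rw [Real.norm_eq_abs, abs_div, abs_of_pos hpos]
    have hnum : |(-2*y)| ≤ 2*r := by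
      rw [abs_mul, abs_of_nonpos (by norm_num : (-2:ℝ) ≤ 0)]
      have : (-(-2):ℝ) = 2 := by norm_num
      rw [this]
      linarith [hyb]
    calc |(-2*y)| / (((n:ℝ)+1)^2 - y^2) ≤ (2*r) / (((n:ℝ)+1)^2 * (1-r^2)) :=
          div_le_div₀ (by positivity) hnum (by positivity) hge
      _ = (2*r/(1-r^2)) / ((n:ℝ)+1)^2 := by rw [div_div]; congr 1; ring
  · exact mem_ball_zero_iff.mpr hzr
  · exact summable_efun hz
  · exact mem_ball_zero_iff.mpr hzr

lemma sin_quot_pos {t : ℝ} (ht : |t| < 1) (ht0 : t ≠ 0) :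
    0 < Real.sin (π*t) / (π*t) := by
  rcases lt_or_gt_of_ne ht0 with h | h
  · have h1 : -1 < t := (abs_lt.mp ht).1
    have hs : Real.sin (π*(-t)) > 0 := by
      apply Real.sin_pos_of_pos_of_lt_pi
      · nlinarith [Real.pi_pos]
      · nlinarith [Real.pi_pos]
    rw [show π*(-t) = -(π*t) by ring, Real.sin_neg] at hs
    have hneg : Real.sin (π*t) < 0 := by linarith
    have hd : π*t < 0 := by nlinarith [Real.pi_pos]
    exact div_pos_of_neg_of_neg hneg hd
  · have h1 : t < 1 := (abs_lt.mp ht).2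
    have hs : Real.sin (π*t) > 0 := by
      apply Real.sin_pos_of_pos_of_lt_pi
      · nlinarith [Real.pi_pos]
      · nlinarith [Real.pi_pos]
    exact div_pos hs (by nlinarith [Real.pi_pos])

lemma tsum_efun_eq {t : ℝ} (ht : |t| < 1) (ht0 : t ≠ 0) :
    ∑' n, efun t n = Real.log (Real.sin (π*t)) - Real.log (π*t) := by
  have hpt : π*t ≠ 0 := mul_ne_zero Real.pi_ne_zero ht0
  have hq := sin_quot_pos ht ht0
  have hsin : Real.sin (π*t) ≠ 0 := by
    intro h; rw [h] at hq; simp at hq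
  have htend : Filter.Tendsto (fun N => ∏ j ∈ Finset.range N, ((1:ℝ) - t^2/((j:ℝ)+1)^2))
      Filter.atTop (nhds (Real.sin (π*t)/(π*t))) := by
    have h0 := (Real.tendsto_euler_sin_prod t).div_const (π*t)
    simpa only [mul_div_cancel_left₀ _ hpt] using h0
  have hlog : Filter.Tendsto (fun N => Real.log (∏ j ∈ Finset.range N, ((1:ℝ) - t^2/((j:ℝ)+1)^2)))
      Filter.atTop (nhds (Real.log (Real.sin (π*t)/(π*t)))) :=
    (Real.continuousAt_log (ne_of_gt hq)).tendsto.comp htend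
  have hps : ∀ N, Real.log (∏ j ∈ Finset.range N, ((1:ℝ) - t^2/((j:ℝ)+1)^2))
      = ∑ j ∈ Finset.range N, efun t j := by
    intro N
    rw [Real.log_prod (fun j _ => ne_of_gt (efun_facts ht j).2.2)]
    rfl
  simp only [hps] at hlog
  have huniq := tendsto_nhds_unique ((summable_efun ht).hasSum.tendsto_sum_nat) hlog
  rw [huniq, Real.log_div hsin hpt]

lemma tsum_cot {z : ℝ} (hz : |z| < 1) (hz0 : z ≠ 0) :
    ∑' n : ℕ, -2*z/(((n:ℝ)+1)^2 - z^2) = π * Real.cos (π*z)/Real.sin (π*z) - 1/z := by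
  have hpt : π*z ≠ 0 := mul_ne_zero Real.pi_ne_zero hz0
  have hq := sin_quot_pos hz hz0
  have hsin : Real.sin (π*z) ≠ 0 := by
    intro h; rw [h] at hq; simp at hq
  have dmul : HasDerivAt (fun t : ℝ => π * t) (π * 1) z := (hasDerivAt_id z).const_mul π
  have dlog1 : HasDerivAt (fun t => Real.log (Real.sin (π*t)))
      (Real.cos (π*z) * (π*1) / Real.sin (π*z)) z := dmul.sin.log hsin
  have dlog2 : HasDerivAt (fun t => Real.log (π*t)) ((π*1)/(π*z)) z := dmul.log hpt
  have dclosed := dlog1.sub dlog2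
  have hev : (fun t => ∑' n, efun t n) =ᶠ[nhds z]
      (fun t => Real.log (Real.sin (π*t)) - Real.log (π*t)) := by
    have hopen : IsOpen (Metric.ball (0:ℝ) 1 ∩ {(0:ℝ)}ᶜ) :=
      Metric.isOpen_ball.inter isOpen_compl_singleton
    have hmem : z ∈ Metric.ball (0:ℝ) 1 ∩ {(0:ℝ)}ᶜ :=
      ⟨mem_ball_zero_iff.mpr hz, hz0⟩
    filter_upwards [hopen.mem_nhds hmem] with t htm
    exact tsum_efun_eq (mem_ball_zero_iff.mp htm.1) htm.2
  have h2 : HasDerivAt (fun t => ∑' n, efun t n)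
      (Real.cos (π*z) * (π*1) / Real.sin (π*z) - (π*1)/(π*z)) z :=
    hev.hasDerivAt_iff.mpr dclosed
  have huniq := (hasDerivAt_tsum_efun hz).unique h2
  rw [huniq]
  congr 1
  · ring
  · rw [div_eq_div_iff hpt hz0]
    ring

lemma tsum_sq {z : ℝ} (hz : |z| < 1) (hz0 : z ≠ 0) :
    ∑' n : ℕ, 2*z^2/(((n:ℝ)+1)^2 - z^2)
      = 1 - π * z * (Real.cos (π*z)/Real.sin (π*z)) := by
  have h := tsum_cot hz hz0
  calc ∑' n : ℕ, 2*z^2/(((n:ℝ)+1)^2 - z^2)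
      = ∑' n : ℕ, (-z) * (-2*z/(((n:ℝ)+1)^2 - z^2)) := tsum_congr fun n => by ring
    _ = (-z) * ∑' n : ℕ, -2*z/(((n:ℝ)+1)^2 - z^2) := tsum_mul_left
    _ = (-z) * (π * Real.cos (π*z)/Real.sin (π*z) - 1/z) := by rw [h]
    _ = 1 - π * z * (Real.cos (π*z)/Real.sin (π*z)) := by
        field_simp
        ring

/-- For `|z| < 1` (and `z ≠ 0`, so that `cot (π z)` is defined),
`d/dz log (G(1+z)/G(1-z)) = log(2π) - π z cot(π z)`. -/
theorem barnesG_log_quotient_deriv (z : ℝ) (hz : |z| < 1) (hz0 : z ≠ 0) :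
    deriv (fun t => Real.log (GG t / GG (-t))) z =
      Real.log (2 * π) - π * z * (Real.cos (π * z) / Real.sin (π * z)) := by
  have hev : (fun t => Real.log (GG t / GG (-t))) =ᶠ[nhds z]
      (fun t => t * Real.log (2*π) - t + ∑' n, dfun t n) := by
    filter_upwards [Metric.isOpen_ball.mem_nhds (mem_ball_zero_iff.mpr hz)] with t htb
    exact key_formula (mem_ball_zero_iff.mp htb)
  rw [hev.deriv_eq]
  have d1 : HasDerivAt (fun t : ℝ => t * Real.log (2*π) - t) (Real.log (2*π) - 1) z := by
    exact HasDerivAt.congr_deriv (((hasDerivAt_id' z).mul_const (Real.log (2*π))).sub (hasDerivAt_id' z)) (by ring)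
  have d2 := hasDerivAt_tsum_dfun hz
  rw [show deriv (fun t => t * Real.log (2*π) - t + ∑' n, dfun t n) z = _ from (d1.add d2).deriv, tsum_sq hz hz0]
  ring
end
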